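/- Let W ⊆ {0,...,n} be nonempty with every maximal run of consecutive integers in W of length at most l (l ≥ 1). Then the height function h satisfies (2l/(2l-1))^{h(W)-1} ≤ |W|; consequently h(W) ≤ 1 + 2l·log n for n ≥ 2. -/

import Mathlib

open Finset

/-- `M - 1 = {m-1 : m ∈ M, m ≥ 1}`. -/
def shiftDown (M : Finset ℕ) : Finset ℕ := (M.filter (1 ≤ ·)).image (· - 1)

/-- `h` satisfies the recursion defining the height function of Mubayi–Rödl:
`h(∅) = 0` and, for `L ≠ ∅`,
`h(L) = 1 + max_{M ∈ S(L)} min {h(L ∩ M), h(L ∩ (M-1))}` where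
`S(L) = {M ⊆ ℕ finite : M ≠ L, 0 < |M| ≤ |L|}`. -/
def IsHeightRec (h : Finset ℕ → ℕ) : Prop :=
  h ∅ = 0 ∧ ∀ L : Finset ℕ, L ≠ ∅ →
    h L = 1 + sSup {k : ℕ | ∃ M : Finset ℕ, M ≠ L ∧ 0 < M.card ∧ M.card ≤ L.card ∧
      k = min (h (L ∩ M)) (h (L ∩ shiftDown M))}

/-- The set appearing in the recursion. -/
def Sset (h : Finset ℕ → ℕ) (L : Finset ℕ) : Set ℕ :=
  {k : ℕ | ∃ M : Finset ℕ, M ≠ L ∧ 0 < M.card ∧ M.card ≤ L.card ∧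
      k = min (h (L ∩ M)) (h (L ∩ shiftDown M))}

lemma isHeightRec_rec {h : Finset ℕ → ℕ} (hh : IsHeightRec h) {L : Finset ℕ} (hL : L ≠ ∅) :
    h L = 1 + sSup (Sset h L) := hh.2 L hL

lemma mem_shiftDown {M : Finset ℕ} {x : ℕ} : x ∈ shiftDown M ↔ x + 1 ∈ M := by
  constructor
  · intro hx
    simp only [shiftDown, mem_image, mem_filter] at hx
    obtain ⟨y, ⟨hyM, hy1⟩, rfl⟩ := hx
    rwa [Nat.sub_add_cancel hy1]
  · intro hx
    simp only [shiftDown, mem_image, mem_filter]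
    exact ⟨x + 1, ⟨hx, by omega⟩, by omega⟩

lemma zero_mem_Sset (h : Finset ℕ → ℕ) (hh : IsHeightRec h) (L : Finset ℕ) (hL : L.Nonempty) :
    0 ∈ Sset h L := by
  classical
  set m := L.max' hL with hm
  refine ⟨{m + 2}, ?_, by simp, by simpa using Finset.card_pos.mpr hL, ?_⟩
  · intro hc
    have h2 : m + 2 ∈ L := hc ▸ (mem_singleton_self _)
    have := L.le_max' _ h2
    omega
  · have h1 : L ∩ {m + 2} = ∅ := by
      ext x
      simp only [mem_inter, mem_singleton, notMem_empty, iff_false, not_and]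
      intro hx hx2
      have := L.le_max' _ hx
      omega
    have h2 : L ∩ shiftDown {m + 2} = ∅ := by
      ext x
      simp only [mem_inter, mem_shiftDown, mem_singleton, notMem_empty, iff_false, not_and]
      intro hx hx2
      have := L.le_max' _ hx
      omega
    rw [h1, h2, hh.1]
    simp

lemma h_le_card (h : Finset ℕ → ℕ) (hh : IsHeightRec h) :
    ∀ (n : ℕ) (L : Finset ℕ), L.card ≤ n → h L ≤ L.card := by
  intro n
  induction n with
  | zero =>
    intro L hL
    have : L = ∅ := card_eq_zero.mp (Nat.le_zero.mp hL)
    simp [this, hh.1]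
  | succ n ih =>
    intro L hL
    rcases eq_or_ne L ∅ with rfl | hne
    · simp [hh.1]
    · have hLne : L.Nonempty := nonempty_iff_ne_empty.mpr hne
      rw [isHeightRec_rec hh hne]
      have hb : ∀ k ∈ Sset h L, k ≤ L.card - 1 := by
        rintro k ⟨M, hML, hM0, hMc, rfl⟩
        have hsub : L ∩ M ⊆ L := inter_subset_left
        have hAne : L ∩ M ≠ L := by
          intro hc
          have hLM : L ⊆ M := by rwa [Finset.inter_eq_left] at hc
          exact hML (Finset.eq_of_subset_of_card_le hLM hMc).symm
        have hAcard : (L ∩ M).card < L.card :=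
          card_lt_card (ssubset_of_subset_of_ne hsub hAne)
        have hih := ih (L ∩ M) (by omega)
        have := min_le_left (h (L ∩ M)) (h (L ∩ shiftDown M))
        omega
      have hs := csSup_le ⟨0, zero_mem_Sset h hh L hLne⟩ hb
      have hc1 : 1 ≤ L.card := card_pos.mpr hLne
      omega

lemma card_le_l_mul (l : ℕ) (hl : 1 ≤ l) (W L : Finset ℕ) (hLW : L ⊆ W)
    (hrun : ∀ a : ℕ, ∃ k : ℕ, k ≤ l ∧ a + k ∉ W) :
    L.card ≤ l * (L.filter fun x => x = 0 ∨ x - 1 ∉ L).card := by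
  classical
  have hPd : ∀ x ∈ L, ∀ i ≤ Nat.findGreatest (fun j => ∀ i ≤ j, x - i ∈ L) x, x - i ∈ L := by
    intro x hx
    have h0 : ∀ i ≤ 0, x - i ∈ L := by
      intro i hi
      simp only [Nat.le_zero] at hi
      subst hi
      simpa using hx
    exact Nat.findGreatest_spec (P := fun j => ∀ i ≤ j, x - i ∈ L) (Nat.zero_le x) h0
  have hdle : ∀ x : ℕ, Nat.findGreatest (fun j => ∀ i ≤ j, x - i ∈ L) x ≤ x :=
    fun x => Nat.findGreatest_le x
  apply card_le_mul_card_image_of_maps_to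
    (f := fun x => x - Nat.findGreatest (fun j => ∀ i ≤ j, x - i ∈ L) x)
  · -- maps to the run-starts
    intro x hx
    set d := Nat.findGreatest (fun j => ∀ i ≤ j, x - i ∈ L) x with hd
    rw [mem_filter]
    refine ⟨hPd x hx _ le_rfl, ?_⟩
    by_contra hcon
    push_neg at hcon
    obtain ⟨h0, h1⟩ := hcon
    have hdx := hdle x
    have hd1 : d + 1 ≤ x := by omega
    have hP1 : ∀ i ≤ d + 1, x - i ∈ L := by
      intro i hi
      rcases Nat.lt_or_ge i (d + 1) with hlt | hge
      · exact hPd x hx i (by omega)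
      · have hieq : i = d + 1 := by omega
        subst hieq
        have heq : x - (d + 1) = (x - d) - 1 := by omega
        rw [heq]
        exact h1
    have := Nat.le_findGreatest (P := fun j => ∀ i ≤ j, x - i ∈ L) hd1 hP1
    rw [← hd] at this
    omega
  · -- fibers have size at most l
    intro a _
    have hdl : ∀ x ∈ L, Nat.findGreatest (fun j => ∀ i ≤ j, x - i ∈ L) x < l := by
      intro x hx
      by_contra hcon
      push_neg at hcon
      set d := Nat.findGreatest (fun j => ∀ i ≤ j, x - i ∈ L) x with hd
      have hdx := hdle x
      obtain ⟨k, hkl, hkW⟩ := hrun (x - d)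
      have hkd : k ≤ d := le_trans hkl hcon
      have heq : x - d + k = x - (d - k) := by omega
      exact hkW (heq ▸ hLW (hPd x hx (d - k) (by omega)))
    have hsub : (L.filter fun x =>
        x - Nat.findGreatest (fun j => ∀ i ≤ j, x - i ∈ L) x = a) ⊆ Finset.Ico a (a + l) := by
      intro x hx
      rw [mem_filter] at hx
      obtain ⟨hxL, hxa⟩ := hx
      have h1 := hdle x
      have h2 := hdl x hxL
      rw [mem_Ico]
      omega
    calc (L.filter fun x =>
          x - Nat.findGreatest (fun j => ∀ i ≤ j, x - i ∈ L) x = a).card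
        ≤ (Finset.Ico a (a + l)).card := card_le_card hsub
      _ = l := by rw [Nat.card_Ico]; omega

lemma inter_bound (L M : Finset ℕ) (hM : M.card ≤ L.card) :
    (L ∩ M).card + (L ∩ shiftDown M).card +
      (L.filter fun x => x = 0 ∨ x - 1 ∉ L).card ≤ 2 * L.card := by
  classical
  set A := L ∩ M with hA
  set B := (L ∩ shiftDown M).image (· + 1) with hB
  have hBcard : B.card = (L ∩ shiftDown M).card :=
    card_image_of_injective _ (fun a b hab => by omega)
  have hUnion : A ∪ B ⊆ M := by
    intro y hy
    rcases mem_union.mp hy with hy | hy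
    · exact (mem_inter.mp hy).2
    · obtain ⟨x, hx, rfl⟩ := mem_image.mp hy
      exact mem_shiftDown.mp (mem_inter.mp hx).2
  have hdisj : Disjoint (A ∩ B) (L.filter fun x => x = 0 ∨ x - 1 ∉ L) := by
    rw [Finset.disjoint_left]
    intro y hy hyE
    obtain ⟨x, hx, rfl⟩ := mem_image.mp (mem_inter.mp hy).2
    have hxL : x ∈ L := (mem_inter.mp hx).1
    rcases (mem_filter.mp hyE).2 with hc | hc
    · omega
    · rw [Nat.add_sub_cancel] at hc
      exact hc hxL
  have h1 : (A ∩ B).card + (L.filter fun x => x = 0 ∨ x - 1 ∉ L).card ≤ L.card := by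
    rw [← card_union_of_disjoint hdisj]
    apply card_le_card
    intro y hy
    rcases mem_union.mp hy with hy | hy
    · exact (mem_inter.mp ((mem_inter.mp hy).1)).1
    · exact (mem_filter.mp hy).1
  have h2 : (A ∪ B).card ≤ L.card := le_trans (card_le_card hUnion) hM
  have h3 : (A ∪ B).card + (A ∩ B).card = A.card + B.card :=
    card_union_add_card_inter A B
  omega

lemma pow_le_card (h : Finset ℕ → ℕ) (hh : IsHeightRec h) (l : ℕ) (hl : 1 ≤ l)
    (W : Finset ℕ) (hrun : ∀ a : ℕ, ∃ k : ℕ, k ≤ l ∧ a + k ∉ W) :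
    ∀ (n : ℕ) (L : Finset ℕ), L.card ≤ n → L ⊆ W → L.Nonempty →
      ((2 * (l : ℝ)) / (2 * (l : ℝ) - 1)) ^ (h L - 1) ≤ (L.card : ℝ) := by
  have hl1 : (1 : ℝ) ≤ (l : ℝ) := by exact_mod_cast hl
  have hden : (0 : ℝ) < 2 * (l : ℝ) - 1 := by linarith
  set c := (2 * (l : ℝ)) / (2 * (l : ℝ) - 1) with hcdef
  have hc1 : 1 ≤ c := by rw [hcdef, le_div_iff₀ hden]; linarith
  intro n
  induction n with
  | zero =>
    intro L hcard _ hne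
    exact absurd hcard (by have := card_pos.mpr hne; omega)
  | succ n ih =>
    intro L hcard hLW hne
    have hne' : L ≠ ∅ := nonempty_iff_ne_empty.mp hne
    have hLpos : 0 < L.card := card_pos.mpr hne
    have hrec := isHeightRec_rec hh hne'
    have key : ∀ k ∈ Sset h L, c ^ k ≤ (L.card : ℝ) := by
      rintro k ⟨M, hML, hM0, hMc, rfl⟩
      rcases Nat.eq_zero_or_pos (min (h (L ∩ M)) (h (L ∩ shiftDown M))) with h0 | hpos
      · rw [h0, pow_zero]
        exact_mod_cast hLpos
      · have hEcard := card_le_l_mul l hl W L hLW hrun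
        have hint := inter_bound L M hMc
        obtain ⟨C, hCmin, hCL, hCbound⟩ :
            ∃ C : Finset ℕ, min (h (L ∩ M)) (h (L ∩ shiftDown M)) ≤ h C ∧ C ⊆ L ∧
              2 * C.card + (L.filter fun x => x = 0 ∨ x - 1 ∉ L).card ≤ 2 * L.card := by
          rcases le_total (L ∩ M).card (L ∩ shiftDown M).card with hle | hle
          · exact ⟨L ∩ M, min_le_left _ _, inter_subset_left, by omega⟩
          · exact ⟨L ∩ shiftDown M, min_le_right _ _, inter_subset_left, by omega⟩
        have hCpos : 0 < h C := lt_of_lt_of_le hpos hCmin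
        have hCne : C.Nonempty := by
          rcases eq_or_ne C ∅ with rfl | hC
          · rw [hh.1] at hCpos; omega
          · exact nonempty_iff_ne_empty.mpr hC
        have hEpos : 0 < (L.filter fun x => x = 0 ∨ x - 1 ∉ L).card := by
          by_contra hcon
          push_neg at hcon
          have h0 : (L.filter fun x => x = 0 ∨ x - 1 ∉ L).card = 0 := by omega
          rw [h0, Nat.mul_zero] at hEcard
          omega
        have hCcard : C.card < L.card := by omega
        have hCW : C ⊆ W := hCL.trans hLW
        have hih := ih C (by omega) hCW hCne
        -- real bound : C.card * (2l) ≤ (2l - 1) * L.card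
        have hCreal : (C.card : ℝ) * (2 * (l : ℝ)) ≤ (2 * (l : ℝ) - 1) * (L.card : ℝ) := by
          have hb : (2 * (C.card : ℝ) + ((L.filter fun x => x = 0 ∨ x - 1 ∉ L).card : ℝ))
              ≤ 2 * (L.card : ℝ) := by exact_mod_cast hCbound
          have he : (L.card : ℝ) ≤ (l : ℝ) * ((L.filter fun x => x = 0 ∨ x - 1 ∉ L).card : ℝ) := by
            exact_mod_cast hEcard
          have hlpos : (0 : ℝ) ≤ (l : ℝ) := by linarith
          nlinarith [mul_le_mul_of_nonneg_right hb hlpos]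
        set k := min (h (L ∩ M)) (h (L ∩ shiftDown M)) with hk
        have hsplit : c ^ k = c * c ^ (k - 1) := by
          conv_lhs => rw [show k = (k - 1) + 1 by omega]
          rw [pow_succ]
          ring
        have hmono : c ^ (k - 1) ≤ c ^ (h C - 1) := pow_le_pow_right₀ hc1 (by omega)
        calc c ^ k = c * c ^ (k - 1) := hsplit
          _ ≤ c * (C.card : ℝ) := by
              apply mul_le_mul_of_nonneg_left (le_trans hmono hih) (by linarith)
          _ ≤ (L.card : ℝ) := by
              rw [hcdef, div_mul_eq_mul_div, div_le_iff₀ hden]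
              nlinarith [hCreal]
    have hbdd : BddAbove (Sset h L) := by
      refine ⟨2 * l * L.card, fun k hk => ?_⟩
      have hck := key k hk
      have hceq : c = 1 + 1 / (2 * (l : ℝ) - 1) := by
        rw [hcdef]
        field_simp
        ring
      have hBer : 1 + (k : ℝ) * (1 / (2 * (l : ℝ) - 1)) ≤ c ^ k := by
        rw [hceq]
        refine one_add_mul_le_pow (le_trans (by norm_num : (-2 : ℝ) ≤ 0) (by positivity)) k
      have hLk : (1 : ℝ) ≤ (L.card : ℝ) := by exact_mod_cast hLpos
      have h5 : (k : ℝ) * (1 / (2 * (l : ℝ) - 1)) ≤ (L.card : ℝ) - 1 := by linarith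
      have h6 : (k : ℝ) * (1 / (2 * (l : ℝ) - 1)) * (2 * (l : ℝ) - 1) = (k : ℝ) := by
        field_simp
      have h7 : (k : ℝ) ≤ ((L.card : ℝ) - 1) * (2 * (l : ℝ) - 1) := by
        rw [← h6]
        exact mul_le_mul_of_nonneg_right h5 (le_of_lt hden)
      have : (k : ℝ) ≤ ((2 * l * L.card : ℕ) : ℝ) := by
        push_cast
        nlinarith [h7, hLk, hl1]
      exact_mod_cast this
    have hSne : (Sset h L).Nonempty := ⟨0, zero_mem_Sset h hh L hne⟩
    have hmem : sSup (Sset h L) ∈ Sset h L := Nat.sSup_mem hSne hbdd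
    have h1 : h L - 1 = sSup (Sset h L) := by omega
    rw [h1]
    exact key _ hmem

/-- Proposition 2.8 of Mubayi–Rödl: if `W ⊆ {0,...,n}` is nonempty and every maximal
run of consecutive integers in `W` has length at most `l ≥ 1`, then
`(2l/(2l-1))^{h(W)-1} ≤ |W|`, and consequently `h(W) ≤ 1 + 2l·log₂ n` for `n ≥ 2`. -/
theorem stmt_13 (h : Finset ℕ → ℕ) (hh : IsHeightRec h) (n l : ℕ) (hl : 1 ≤ l)
    (W : Finset ℕ) (hW : W.Nonempty) (hWn : W ⊆ Finset.range (n + 1))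
    (hrun : ∀ a : ℕ, ∃ k : ℕ, k ≤ l ∧ a + k ∉ W) :
    ((2 * (l : ℝ)) / (2 * (l : ℝ) - 1)) ^ (h W - 1) ≤ (W.card : ℝ) ∧
      (2 ≤ n → (h W : ℝ) ≤ 1 + 2 * (l : ℝ) * Real.logb 2 n) := by
  have hl1 : (1 : ℝ) ≤ (l : ℝ) := by exact_mod_cast hl
  have hden : (0 : ℝ) < 2 * (l : ℝ) - 1 := by linarith
  have part1 : ((2 * (l : ℝ)) / (2 * (l : ℝ) - 1)) ^ (h W - 1) ≤ (W.card : ℝ) :=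
    pow_le_card h hh l hl W hrun W.card W le_rfl (Finset.Subset.refl W) hW
  refine ⟨part1, ?_⟩
  intro hn
  have hW1 : 1 ≤ h W := by
    rw [isHeightRec_rec hh (nonempty_iff_ne_empty.mp hW)]
    omega
  have hWcard : 1 ≤ W.card := card_pos.mpr hW
  have hWn' : W.card ≤ n + 1 := le_trans (card_le_card hWn) (by simp)
  rcases hn.eq_or_lt with rfl | hn3
  · -- n = 2
    have hhW : h W ≤ 3 := le_trans (h_le_card h hh W.card W le_rfl) (by omega)
    have h3 : (h W : ℝ) ≤ 3 := by exact_mod_cast hhW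
    have hlb : Real.logb 2 ((2 : ℕ) : ℝ) = 1 := by
      norm_num
    rw [hlb]
    linarith
  · -- n ≥ 3
    have hn3' : (3 : ℝ) ≤ (n : ℝ) := by exact_mod_cast hn3
    set c := (2 * (l : ℝ)) / (2 * (l : ℝ) - 1) with hcdef
    have hcpos : (0 : ℝ) < c := by
      rw [hcdef]
      positivity
    set m := h W - 1 with hm
    have hm0 : (0 : ℝ) ≤ (m : ℝ) := Nat.cast_nonneg m
    have hlogc : 1 / (2 * (l : ℝ)) ≤ Real.log c := by
      have hinv : Real.log c⁻¹ ≤ c⁻¹ - 1 := Real.log_le_sub_one_of_pos (by positivity)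
      rw [Real.log_inv] at hinv
      have hcinv : c⁻¹ = (2 * (l : ℝ) - 1) / (2 * (l : ℝ)) := by
        rw [hcdef, inv_div]
      rw [hcinv] at hinv
      have heq : (2 * (l : ℝ) - 1) / (2 * (l : ℝ)) - 1 = -(1 / (2 * (l : ℝ))) := by
        field_simp
        ring
      rw [heq] at hinv
      linarith
    have hlogpow : (m : ℝ) * Real.log c ≤ Real.log ((n : ℝ) + 1) := by
      have hle : c ^ m ≤ ((n : ℝ) + 1) := by
        refine le_trans part1 ?_
        exact_mod_cast hWn'
      have := Real.log_le_log (by positivity) hle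
      rwa [Real.log_pow] at this
    have hm2l : (m : ℝ) ≤ 2 * (l : ℝ) * Real.log ((n : ℝ) + 1) := by
      have h1 : (m : ℝ) * (1 / (2 * (l : ℝ))) ≤ (m : ℝ) * Real.log c :=
        mul_le_mul_of_nonneg_left hlogc hm0
      have h2l : (0 : ℝ) < 2 * (l : ℝ) := by linarith
      have h2 : (m : ℝ) * (1 / (2 * (l : ℝ))) ≤ Real.log ((n : ℝ) + 1) := le_trans h1 hlogpow
      have h3 : (m : ℝ) * (1 / (2 * (l : ℝ))) * (2 * (l : ℝ)) = (m : ℝ) := by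
        field_simp
      have h4 : (m : ℝ) ≤ Real.log ((n : ℝ) + 1) * (2 * (l : ℝ)) := by
        rw [← h3]
        exact mul_le_mul_of_nonneg_right h2 (le_of_lt h2l)
      linarith
    have hlog2pos : (0 : ℝ) < Real.log 2 := Real.log_pos (by norm_num)
    have hlog2 : Real.log 2 ≤ 3 / 4 := by
      have := Real.log_two_lt_d9
      linarith
    have hlogn_ge : 1 ≤ Real.log (n : ℝ) := by
      rw [Real.le_log_iff_exp_le (by linarith)]
      have := Real.exp_one_lt_d9
      linarith
    have hstep : Real.log ((n : ℝ) + 1) ≤ Real.log (n : ℝ) + 1 / 3 := by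
      have hnpos : (0 : ℝ) < (n : ℝ) := by linarith
      have h1 : Real.log (((n : ℝ) + 1) / (n : ℝ)) ≤ ((n : ℝ) + 1) / (n : ℝ) - 1 :=
        Real.log_le_sub_one_of_pos (by positivity)
      have h2 : ((n : ℝ) + 1) / (n : ℝ) - 1 = 1 / (n : ℝ) := by
        field_simp
        ring
      have h3 : (1 : ℝ) / (n : ℝ) ≤ 1 / 3 := by
        apply one_div_le_one_div_of_le <;> linarith
      have h4 : Real.log ((n : ℝ) + 1) = Real.log (((n : ℝ) + 1) / (n : ℝ)) + Real.log (n : ℝ) := by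
        rw [← Real.log_mul (by positivity) (by positivity)]
        congr 1
        field_simp
      linarith
    have hlogn1 : Real.log ((n : ℝ) + 1) * Real.log 2 ≤ Real.log (n : ℝ) := by
      nlinarith [mul_le_mul_of_nonneg_right hstep (le_of_lt hlog2pos),
        mul_le_mul_of_nonneg_left hlog2 (by linarith : (0 : ℝ) ≤ Real.log (n : ℝ) + 1 / 3)]
    have hgoal : (m : ℝ) ≤ 2 * (l : ℝ) * Real.logb 2 (n : ℝ) := by
      calc (m : ℝ) ≤ 2 * (l : ℝ) * Real.log ((n : ℝ) + 1) := hm2l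
        _ ≤ 2 * (l : ℝ) * (Real.log (n : ℝ) / Real.log 2) := by
            apply mul_le_mul_of_nonneg_left _ (by linarith : (0 : ℝ) ≤ 2 * (l : ℝ))
            rw [le_div_iff₀ hlog2pos]
            linarith [hlogn1]
        _ = 2 * (l : ℝ) * Real.logb 2 (n : ℝ) := by rw [Real.logb]
    have hmw : h W = m + 1 := by omega
    have : (h W : ℝ) = (m : ℝ) + 1 := by exact_mod_cast hmw
    rw [this]
    linarith
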